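/- arXiv:2012.10123 — 2 statements merged into one kernel-verified Lean document; each statement's English description precedes it below -/
import Mathlib

section
/- Let k ≥ 1, let a, b ∈ {1, 2, ..., 2k+1} both be even, and let H_1, H_2, ..., H_{2k+1} be graphs each with n vertices. If the generalized lexicographic product P_{2k+1}[H_1, H_2, ..., H_{2k+1}] contains a Hamiltonian path starting in a vertex of the copy of H_a and ending in a vertex of the copy of H_b, then the sum over i = 0, ..., k of π(H_{2i+1}) is at least n + 1. -/
open SimpleGraph Finset

/-- The generalized lexicographic product `G[H₁,…,Hₘ]` of a graph `G` on vertices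
`u_1, …, u_m` (indexed by `Fin m`, so `u_i` corresponds to index `i-1`) and graphs
`H 0, …, H (m-1)`, each on `n` vertices: each vertex `i` of `G` is replaced by a copy
of `H i`, and all edges are added between the copies of `H i` and `H j` whenever
`i` and `j` are adjacent in `G`. -/
def genLexProd {m n : ℕ} (G : SimpleGraph (Fin m)) (H : Fin m → SimpleGraph (Fin n)) :
    SimpleGraph (Fin m × Fin n) where
  Adj p q := G.Adj p.1 q.1 ∨ (p.1 = q.1 ∧ (H p.1).Adj p.2 q.2)
  symm := by
    constructor
    rintro p q (h | ⟨h1, h2⟩)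
    · exact Or.inl h.symm
    · exact Or.inr ⟨h1.symm, by rw [← h1]; exact h2.symm⟩
  loopless := by
    constructor
    rintro p (h | ⟨-, h2⟩)
    · exact G.loopless.irrefl _ h
    · exact (H p.1).loopless.irrefl _ h2

/-- The lexicographic product `G[H]`. -/
def lexProd {α β : Type*} (G : SimpleGraph α) (H : SimpleGraph β) :
    SimpleGraph (α × β) where
  Adj p q := G.Adj p.1 q.1 ∨ (p.1 = q.1 ∧ H.Adj p.2 q.2)
  symm := by
    constructor
    rintro p q (h | ⟨h1, h2⟩)
    · exact Or.inl h.symm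
    · exact Or.inr ⟨h1.symm, h2.symm⟩
  loopless := by
    constructor
    rintro p (h | ⟨-, h2⟩)
    · exact G.loopless.irrefl _ h
    · exact H.loopless.irrefl _ h2

/-- A linear forest: an acyclic graph in which every vertex has degree at most `2`,
i.e. a forest all of whose components are paths. -/
def SimpleGraph.IsLinearForest {V : Type*} (F : SimpleGraph V) : Prop :=
  F.IsAcyclic ∧ ∀ v : V, (F.neighborSet v).ncard ≤ 2

/-- `piLF H` is `π(H)`: the maximum number of edges of a spanning linear forest of `H`.
(A spanning subgraph of `H` is a graph on the same vertex set all of whose edges are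
edges of `H`, i.e. a graph `F ≤ H`.) -/
noncomputable def piLF {V : Type*} (H : SimpleGraph V) : ℕ :=
  sSup {m : ℕ | ∃ F : SimpleGraph V, F ≤ H ∧ F.IsLinearForest ∧ F.edgeSet.ncard = m}

/-- A graph is traceable if it contains a hamiltonian path. -/
def SimpleGraph.IsTraceable {V : Type*} [DecidableEq V] (G : SimpleGraph V) : Prop :=
  ∃ (u v : V) (p : G.Walk u v), p.IsHamiltonian

/-- A graph is hamiltonian connected if any two distinct vertices are joined by a
hamiltonian path. -/
def SimpleGraph.IsHamiltonianConnected {V : Type*} [DecidableEq V] (G : SimpleGraph V) : Prop :=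
  ∀ u v : V, u ≠ v → ∃ p : G.Walk u v, p.IsHamiltonian



lemma myGetVert_eq_getElem {V : Type*} {G : SimpleGraph V} {u v : V}
    (p : G.Walk u v) {i : ℕ} (hi : i ≤ p.length) :
    p.getVert i = p.support[i]'(by rw [SimpleGraph.Walk.length_support]; omega) := by
  induction p generalizing i with
  | nil => simp only [SimpleGraph.Walk.length_nil, Nat.le_zero] at hi; subst hi; simp
  | cons h q ih =>
    cases i with
    | zero => simp
    | succ i =>
      rw [SimpleGraph.Walk.getVert_cons_succ]
      simp only [SimpleGraph.Walk.support_cons, List.getElem_cons_succ]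
      exact ih (by simpa using Nat.le_of_succ_le_succ hi)

lemma myGetVert_inj {V : Type*} {G : SimpleGraph V} {u v : V} {p : G.Walk u v}
    (hp : p.IsPath) {i j : ℕ} (hi : i ≤ p.length) (hj : j ≤ p.length)
    (h : p.getVert i = p.getVert j) : i = j := by
  rw [myGetVert_eq_getElem p hi, myGetVert_eq_getElem p hj] at h
  exact (hp.support_nodup.getElem_inj_iff).mp h

lemma myMem_edges_iff {V : Type*} {G : SimpleGraph V} {u v a b : V} (p : G.Walk u v) :
    s(a, b) ∈ p.edges ↔ ∃ i, s(p.getVert i, p.getVert (i + 1)) = s(a, b) ∧ i < p.length := by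
  rw [← SimpleGraph.Walk.mem_edges_toSubgraph, SimpleGraph.Subgraph.mem_edgeSet,
    SimpleGraph.Walk.toSubgraph_adj_iff]

lemma myCycle_snd_ne {V : Type*} {G : SimpleGraph V} {v : V} {c : G.Walk v v}
    (hc : c.IsCycle) : c.getVert 1 ≠ c.getVert (c.length - 1) := by
  have h3 := hc.three_le_length
  have ht : c.support.tail.Nodup := hc.support_nodup
  have hlen : c.support.length = c.length + 1 := SimpleGraph.Walk.length_support c
  have hlt : c.support.tail.length = c.length := by simp [hlen]
  have tg : ∀ (i : ℕ) (h1 : i < c.support.tail.length),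
      c.support.tail[i] = c.getVert (i + 1) := by
    intro i h1
    rw [List.getElem_tail]
    exact (myGetVert_eq_getElem c (by omega)).symm
  intro h
  have h0 : c.support.tail[0]'(by omega) = c.support.tail[c.length - 2]'(by omega) := by
    rw [tg 0 (by omega), tg (c.length - 2) (by omega)]
    rw [show c.length - 2 + 1 = c.length - 1 by omega]
    exact h
  have := ht.getElem_inj_iff.mp h0
  omega

lemma myNoCycle {V : Type*} [DecidableEq V] {G : SimpleGraph V} {F : SimpleGraph V}
    {x y : V} (p : G.Walk x y) (hp : p.IsPath) :
    ∀ {v : V} (c : F.Walk v v), c.IsCycle → (∀ e ∈ c.edges, e ∈ p.edges) → False := by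
  induction p with
  | nil =>
    intro v c hc hsub
    have h3 := hc.three_le_length
    have : c.edges ≠ [] := by
      intro h
      have := SimpleGraph.Walk.length_edges c
      rw [h] at this
      simp at this
      omega
    obtain ⟨e, he⟩ := List.exists_mem_of_ne_nil _ this
    simpa using hsub e he
  | @cons x b y h q ih =>
    intro v c hc hsub
    rw [SimpleGraph.Walk.cons_isPath_iff] at hp
    by_cases hxe : s(x, b) ∈ c.edges
    · -- rotate the cycle to start at x
      have hxs : x ∈ c.support := c.fst_mem_support_of_mem_edges hxe
      set c' := c.rotate x hxs with hc'def
      have hc' : c'.IsCycle := hc.rotate hxs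
      have hrot : ∀ e ∈ c'.edges, e ∈ c.edges := by
        intro e he
        exact (SimpleGraph.Walk.rotate_edges c x hxs).mem_iff.mp he
      have h3 := hc'.three_le_length
      -- any edge of c' incident to x is s(x, b)
      have hkey : ∀ w : V, s(x, w) ∈ c'.edges → w = b := by
        intro w hw
        have := hsub _ (hrot _ hw)
        rw [SimpleGraph.Walk.edges_cons, List.mem_cons] at this
        rcases this with h1 | h1
        · rw [Sym2.eq_iff] at h1
          rcases h1 with ⟨-, h1⟩ | ⟨h1, h2⟩
          · exact h1
          · exact absurd h1 h.ne
        · exact absurd (SimpleGraph.Walk.fst_mem_support_of_mem_edges q h1) hp.2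
      have e1 : s(x, c'.getVert 1) ∈ c'.edges := by
        have := SimpleGraph.Walk.toSubgraph_adj_getVert c' (i := 0) (by omega)
        rw [SimpleGraph.Walk.getVert_zero] at this
        rw [← SimpleGraph.Walk.mem_edges_toSubgraph]
        exact this
      have e2 : s(x, c'.getVert (c'.length - 1)) ∈ c'.edges := by
        have := SimpleGraph.Walk.toSubgraph_adj_getVert c' (i := c'.length - 1)
          (by omega)
        rw [show c'.length - 1 + 1 = c'.length by omega, SimpleGraph.Walk.getVert_length] at this
        rw [← SimpleGraph.Walk.mem_edges_toSubgraph]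
        exact this.symm
      have := myCycle_snd_ne hc'
      rw [hkey _ e1, hkey _ e2] at this
      exact this rfl
    · exact ih hp.1 c hc (fun e he => by
        have := hsub e he
        rw [SimpleGraph.Walk.edges_cons, List.mem_cons] at this
        rcases this with h1 | h1
        · exact absurd (h1 ▸ he) hxe
        · exact h1)

lemma myDegLe {V : Type*} {G : SimpleGraph V} {x y : V} {p : G.Walk x y}
    (hp : p.IsPath) (v : V) : {w : V | s(v, w) ∈ p.edges}.ncard ≤ 2 := by
  by_cases hne : {w : V | s(v, w) ∈ p.edges} = ∅
  · simp [hne]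
  · obtain ⟨w0, hw0⟩ := Set.nonempty_iff_ne_empty.mpr hne
    have hvs : v ∈ p.support := p.fst_mem_support_of_mem_edges hw0
    obtain ⟨j, hjv, hj⟩ := SimpleGraph.Walk.mem_support_iff_exists_getVert.mp hvs
    have hsub : {w : V | s(v, w) ∈ p.edges} ⊆ {p.getVert (j + 1), p.getVert (j - 1)} := by
      intro w hw
      obtain ⟨i, hie, hi⟩ := (myMem_edges_iff p).mp hw
      rw [Sym2.eq_iff] at hie
      rcases hie with ⟨h1, h2⟩ | ⟨h1, h2⟩
      · have hij : i = j := myGetVert_inj hp (by omega) hj (h1.trans hjv.symm)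
        subst hij
        exact Or.inl h2.symm
      · have hij : i + 1 = j := myGetVert_inj hp (by omega) hj (h2.trans hjv.symm)
        right
        rw [← h1]
        congr 1
        omega
    calc {w : V | s(v, w) ∈ p.edges}.ncard
        ≤ ({p.getVert (j + 1), p.getVert (j - 1)} : Set V).ncard :=
          Set.ncard_le_ncard hsub (Set.toFinite _)
      _ ≤ 2 := by
          have := Set.ncard_insert_le (p.getVert (j + 1)) ({p.getVert (j - 1)} : Set V)
          simpa using this


lemma myRangeOdd (m : ℕ) : ((Finset.range m).filter (fun i => i % 2 = 1)).card = m / 2 := by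
  induction m with
  | zero => simp
  | succ m ih =>
    rw [Finset.range_add_one, Finset.filter_insert]
    by_cases h : m % 2 = 1
    · rw [if_pos h, Finset.card_insert_of_notMem (by simp), ih]
      omega
    · rw [if_neg h, ih]
      omega

lemma myFilterSplit {α : Type*} (l : List α) (p q : α → Prop)
    [DecidablePred p] [DecidablePred q] :
    (l.filter fun a => decide (p a)).length
      = (l.filter fun a => decide (p a ∧ q a)).length
        + (l.filter fun a => decide (p a ∧ ¬ q a)).length := by
  induction l with
  | nil => simp
  | cons a l ih =>
    simp only [List.filter_cons]
    by_cases hp : p a <;> by_cases hq : q a <;>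
      simp [hp, hq, ih] <;> omega

lemma myFilterNot {α : Type*} (l : List α) (p : α → Prop) [DecidablePred p] :
    (l.filter fun a => decide (p a)).length
      + (l.filter fun a => decide (¬ p a)).length = l.length := by
  simp only [decide_not]
  induction l with
  | nil => simp
  | cons a l ih =>
    simp only [List.filter_cons]
    by_cases hp : p a <;> simp [hp] <;> omega

lemma myFinCard (m : ℕ) :
    ((Finset.univ : Finset (Fin m)).filter (fun i => i.val % 2 = 1)).card = m / 2 := by
  rw [Finset.card_filter, Fin.sum_univ_eq_sum_range (fun i => if i % 2 = 1 then 1 else 0),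
    ← Finset.card_filter, myRangeOdd]

lemma myProdCard (A n : ℕ) :
    ((Finset.univ : Finset (Fin A × Fin n)).filter (fun v => v.1.val % 2 = 1)).card
      = (A / 2) * n := by
  rw [Finset.card_filter, Fintype.sum_prod_type]
  have : ∀ a : Fin A, (∑ _b : Fin n, if (a.val % 2 = 1) then 1 else 0)
      = n * (if (a.val % 2 = 1) then 1 else 0) := by
    intro a
    rw [Finset.sum_const, Finset.card_univ, Fintype.card_fin, smul_eq_mul]
  simp_rw [this, ← Finset.mul_sum, ← Finset.card_filter, myFinCard]
  ring

lemma myListFilterToFinset {α : Type*} [DecidableEq α] (l : List α) (p : α → Prop)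
    [DecidablePred p] :
    (l.filter fun a => decide (p a)).toFinset = l.toFinset.filter p := by
  ext a
  simp [List.mem_filter]

theorem odd_path_hampath_even_even (k n : ℕ) (hk : 1 ≤ k) (a b : ℕ)
    (ha1 : 1 ≤ a) (ha2 : a ≤ 2 * k + 1) (hb1 : 1 ≤ b) (hb2 : b ≤ 2 * k + 1)
    (hae : Even a) (hbe : Even b)
    (H : Fin (2 * k + 1) → SimpleGraph (Fin n))
    (x y : Fin (2 * k + 1) × Fin n)
    (p : (genLexProd (pathGraph (2 * k + 1)) H).Walk x y) (hp : p.IsHamiltonian)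
    (hx : (x.1 : ℕ) = a - 1) (hy : (y.1 : ℕ) = b - 1) :
    n + 1 ≤ ∑ i : Fin (k + 1), piLF (H ⟨2 * i.1, by have := i.2; omega⟩) := by
  have hn : 0 < n := x.2.pos
  have hpath : p.IsPath := hp.isPath
  have hcard : Fintype.card (Fin (2 * k + 1) × Fin n) = (2 * k + 1) * n := by simp
  have hpos : 1 ≤ (2 * k + 1) * n := Nat.mul_pos (by omega) hn
  have hplen : p.length + 1 = (2 * k + 1) * n := by
    have h := hp.length_eq; rw [hcard] at h; omega
  have hQx : x.1.val % 2 = 1 := by obtain ⟨t, ht⟩ := hae; omega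
  have hQy : y.1.val % 2 = 1 := by obtain ⟨t, ht⟩ := hbe; omega
  -- support counting
  have hSlen : p.support.length = (2 * k + 1) * n := by
    rw [SimpleGraph.Walk.length_support]; omega
  have hSnodup : p.support.Nodup := hpath.support_nodup
  have hSfilter : (p.support.filter fun v => decide (v.1.val % 2 = 1)).length = k * n := by
    rw [← List.toFinset_card_of_nodup (hSnodup.filter _), myListFilterToFinset,
      hp.support_toFinset]
    have := myProdCard (2 * k + 1) n
    rw [show (2 * k + 1) / 2 = k by omega] at this
    exact this
  have hSsplit : p.support = p.support.dropLast ++ [y] := by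
    conv_lhs => rw [← List.dropLast_append_getLast p.support_ne_nil]
    rw [SimpleGraph.Walk.getLast_support]
  have hfilter_dropLast :
      (p.support.dropLast.filter fun v => decide (v.1.val % 2 = 1)).length + 1 = k * n := by
    have h2 : (p.support.filter fun v => decide (v.1.val % 2 = 1)).length
        = (p.support.dropLast.filter fun v => decide (v.1.val % 2 = 1)).length
          + (([y] : List _).filter fun v => decide (v.1.val % 2 = 1)).length := by
      conv_lhs => rw [hSsplit]
      rw [List.filter_append, List.length_append]
    rw [hSfilter] at h2
    simp [hQy] at h2
    omega
  have hfilter_tail :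
      (p.support.tail.filter fun v => decide (v.1.val % 2 = 1)).length + 1 = k * n := by
    have h2 : (p.support.filter fun v => decide (v.1.val % 2 = 1)).length
        = (p.support.tail.filter fun v => decide (v.1.val % 2 = 1)).length + 1 := by
      conv_lhs => rw [p.support_eq_cons]
      rw [List.filter_cons]
      simp [hQx]
    rw [hSfilter] at h2
    omega
  -- dart counting
  have hDlen : p.darts.length + 1 = (2 * k + 1) * n := by
    rw [SimpleGraph.Walk.length_darts]; omega
  have hc1 : (p.darts.filter fun d => decide (d.fst.1.val % 2 = 1)).length + 1 = k * n := by
    rw [← p.map_fst_darts, List.filter_map, List.length_map] at hfilter_dropLast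
    convert hfilter_dropLast using 3
    rfl
  have hc2 : (p.darts.filter fun d => decide (d.snd.1.val % 2 = 1)).length + 1 = k * n := by
    rw [← p.map_snd_darts, List.filter_map, List.length_map] at hfilter_tail
    convert hfilter_tail using 3
    rfl
  have hs1 := myFilterSplit p.darts (fun d => d.fst.1.val % 2 = 1) (fun d => d.snd.1.val % 2 = 1)
  have hs2 := myFilterSplit p.darts (fun d => d.snd.1.val % 2 = 1) (fun d => d.fst.1.val % 2 = 1)
  have hsn := myFilterNot p.darts (fun d => d.fst.1.val % 2 = 1)
  have hs3 := myFilterSplit p.darts (fun d => ¬ (d.fst.1.val % 2 = 1))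
    (fun d => d.snd.1.val % 2 = 1)
  have hcomm1 : (p.darts.filter fun d =>
        decide (d.snd.1.val % 2 = 1 ∧ d.fst.1.val % 2 = 1)).length
      = (p.darts.filter fun d =>
        decide (d.fst.1.val % 2 = 1 ∧ d.snd.1.val % 2 = 1)).length := by
    congr 1
    apply List.filter_congr
    intro d _
    simp [and_comm]
  have hcomm2 : (p.darts.filter fun d =>
        decide (d.snd.1.val % 2 = 1 ∧ ¬ d.fst.1.val % 2 = 1)).length
      = (p.darts.filter fun d =>
        decide (¬ d.fst.1.val % 2 = 1 ∧ d.snd.1.val % 2 = 1)).length := by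
    congr 1
    apply List.filter_congr
    intro d _
    simp [and_comm]
  set L00 := p.darts.filter fun d =>
    decide (¬ d.fst.1.val % 2 = 1 ∧ ¬ d.snd.1.val % 2 = 1) with hL00def
  have hmul : (2 * k + 1) * n = 2 * (k * n) + n := by ring
  have hL00 : n + 1 ≤ L00.length := by omega
  -- edges inside odd copies
  have hedges : p.edges = p.darts.map SimpleGraph.Dart.edge := rfl
  have hnodupE : (L00.map SimpleGraph.Dart.edge).Nodup := by
    have h1 : (L00.map SimpleGraph.Dart.edge).Sublist (p.darts.map SimpleGraph.Dart.edge) :=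
      List.filter_sublist.map _
    exact h1.nodup (hedges ▸ hpath.isTrail.edges_nodup)
  set T := (L00.map SimpleGraph.Dart.edge).toFinset with hTdef
  have hT : T.card = L00.length := by
    rw [hTdef, List.toFinset_card_of_nodup hnodupE, List.length_map]
  have key : ∀ e ∈ T, ∃ (i : Fin (2 * k + 1)) (u w : Fin n),
      e = s((i, u), (i, w)) ∧ i.val % 2 = 0 ∧ u ≠ w ∧ e ∈ p.edges := by
    intro e he
    rw [hTdef, List.mem_toFinset, List.mem_map] at he
    obtain ⟨d, hd, rfl⟩ := he
    have hdD : d ∈ p.darts := List.mem_of_mem_filter hd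
    have hprop : ¬ d.fst.1.val % 2 = 1 ∧ ¬ d.snd.1.val % 2 = 1 := by
      have := List.of_mem_filter hd
      simpa using this
    have hadj : (genLexProd (pathGraph (2 * k + 1)) H).Adj d.fst d.snd := d.adj
    rcases hadj with hpg | ⟨heq, hH⟩
    · rw [pathGraph_adj] at hpg
      exfalso
      omega
    · refine ⟨d.fst.1, d.fst.2, d.snd.2, ?_, by omega, hH.ne, ?_⟩
      · show d.edge = _
        have h2 : d.snd = (d.fst.1, d.snd.2) := by
          apply Prod.ext
          · exact heq.symm
          · rfl
        rw [SimpleGraph.Dart.edge, ← h2]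
      · rw [hedges]
        exact List.mem_map_of_mem hdD
  -- the family of linear forests in the odd copies
  have hidx : ∀ i : Fin (k + 1), 2 * i.val < 2 * k + 1 := fun i => by have := i.2; omega
  let idx : Fin (k + 1) → Fin (2 * k + 1) := fun i => ⟨2 * i.val, hidx i⟩
  let F : Fin (k + 1) → SimpleGraph (Fin n) := fun i =>
    { Adj := fun u w => u ≠ w ∧ s(((idx i, u) : Fin (2 * k + 1) × Fin n), (idx i, w)) ∈ p.edges
      symm := by
        constructor
        intro u w hw
        exact ⟨hw.1.symm, by rw [Sym2.eq_swap]; exact hw.2⟩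
      loopless := ⟨fun u hu => hu.1 rfl⟩ }
  have hle : ∀ i, F i ≤ H (idx i) := by
    intro i u w hw
    have hadj := p.adj_of_mem_edges hw.2
    rcases hadj with hpg | ⟨-, hH⟩
    · exfalso
      rw [pathGraph_adj] at hpg
      have h' : (idx i).val + 1 = (idx i).val ∨ (idx i).val + 1 = (idx i).val := hpg
      omega
    · exact hH
  have hlf : ∀ i, (F i).IsLinearForest := by
    intro i
    constructor
    · intro v c hc
      let Fbig : SimpleGraph (Fin (2 * k + 1) × Fin n) :=
        SimpleGraph.fromEdgeSet {e | e ∈ p.edges}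
      let g' : F i →g Fbig :=
        ⟨fun u => (idx i, u), by
          intro u w hw
          rw [SimpleGraph.fromEdgeSet_adj]
          exact ⟨hw.2, by simp [hw.1]⟩⟩
      have hginj : Function.Injective g' := by
        intro u w h
        exact congrArg Prod.snd h
      have hc2 : (c.map g').IsCycle := hc.map hginj
      apply myNoCycle p hpath (c.map g') hc2
      intro e he'
      have h3 : e ∈ Fbig.edgeSet := SimpleGraph.Walk.edges_subset_edgeSet _ he'
      rw [SimpleGraph.edgeSet_fromEdgeSet] at h3
      exact h3.1
    · intro v
      have hinj2 : Function.Injective (fun w : Fin n => ((idx i, w) : Fin (2 * k + 1) × Fin n)) :=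
        fun u w h => congrArg Prod.snd h
      calc ((F i).neighborSet v).ncard
          = ((fun w : Fin n => ((idx i, w) : Fin (2 * k + 1) × Fin n)) ''
              ((F i).neighborSet v)).ncard := (Set.ncard_image_of_injective _ hinj2).symm
        _ ≤ {w : Fin (2 * k + 1) × Fin n | s((idx i, v), w) ∈ p.edges}.ncard := by
            apply Set.ncard_le_ncard _ (Set.toFinite _)
            rintro _ ⟨w, hw, rfl⟩
            exact hw.2
        _ ≤ 2 := myDegLe hpath _
  have hpi : ∀ i, (F i).edgeSet.ncard ≤ piLF (H (idx i)) := by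
    intro i
    apply le_csSup
    · refine ⟨(Set.univ : Set (Sym2 (Fin n))).ncard, ?_⟩
      rintro m ⟨F', -, -, rfl⟩
      exact Set.ncard_le_ncard (Set.subset_univ _) Set.finite_univ
    · exact ⟨F i, hle i, hlf i, rfl⟩
  -- partition T according to the copy containing each edge
  classical
  have hTsub : T ⊆ Finset.univ.biUnion
      (fun i : Fin (k + 1) => T.filter (fun e => ∀ v ∈ e, v.1 = idx i)) := by
    intro e he
    obtain ⟨i0, u, w, hef, hpar, hne, hmem⟩ := key e he
    rw [Finset.mem_biUnion]
    refine ⟨⟨i0.val / 2, by have := i0.2; omega⟩, Finset.mem_univ _, ?_⟩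
    rw [Finset.mem_filter]
    refine ⟨he, ?_⟩
    intro v hv
    rw [hef, Sym2.mem_iff] at hv
    have hvi : v.1 = i0 := by rcases hv with rfl | rfl <;> rfl
    rw [hvi]
    apply Fin.ext
    show i0.val = 2 * (i0.val / 2)
    omega
  have hTi : ∀ i : Fin (k + 1),
      (T.filter (fun e => ∀ v ∈ e, v.1 = idx i)).card ≤ (F i).edgeSet.ncard := by
    intro i
    rw [Set.ncard_eq_toFinset_card ((F i).edgeSet) (Set.toFinite _)]
    apply Finset.card_le_card_of_injOn (fun e => Sym2.map Prod.snd e)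
    · intro e he
      rw [Finset.mem_coe, Finset.mem_filter] at he
      obtain ⟨heT, hall⟩ := he
      obtain ⟨i0, u, w, hef, hpar, hne, hmem⟩ := key e heT
      have hi0 : i0 = idx i := by
        have := hall (i0, u) (by rw [hef]; exact Sym2.mem_mk_left _ _)
        exact this
      simp only [Finset.mem_coe, Set.Finite.mem_toFinset, hef, Sym2.map_pair_eq]
      show (F i).Adj u w
      refine ⟨hne, ?_⟩
      rw [← hi0, ← hef]
      exact hmem
    · intro e he e' he'
      rw [Finset.mem_coe, Finset.mem_filter] at he he'
      obtain ⟨i0, u, w, hef, hpar, hne, hmem⟩ := key e he.1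
      obtain ⟨i0', u', w', hef', hpar', hne', hmem'⟩ := key e' he'.1
      have hi0 : i0 = idx i := he.2 (i0, u) (by rw [hef]; exact Sym2.mem_mk_left _ _)
      have hi0' : i0' = idx i := he'.2 (i0', u') (by rw [hef']; exact Sym2.mem_mk_left _ _)
      intro hmap
      simp only [hef, hef', Sym2.map_pair_eq] at hmap
      rw [hef, hef', hi0, hi0']
      rw [Sym2.eq_iff] at hmap ⊢
      rcases hmap with ⟨rfl, rfl⟩ | ⟨rfl, rfl⟩
      · exact Or.inl ⟨rfl, rfl⟩
      · exact Or.inr ⟨rfl, rfl⟩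
  calc n + 1 ≤ L00.length := hL00
    _ = T.card := hT.symm
    _ ≤ (Finset.univ.biUnion
        (fun i : Fin (k + 1) => T.filter (fun e => ∀ v ∈ e, v.1 = idx i))).card :=
      Finset.card_le_card hTsub
    _ ≤ ∑ i : Fin (k + 1), (T.filter (fun e => ∀ v ∈ e, v.1 = idx i)).card :=
      Finset.card_biUnion_le
    _ ≤ ∑ i : Fin (k + 1), (F i).edgeSet.ncard := Finset.sum_le_sum fun i _ => hTi i
    _ ≤ ∑ i : Fin (k + 1), piLF (H ⟨2 * i.1, by have := i.2; omega⟩) :=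
      Finset.sum_le_sum fun i _ => hpi i
end

section
/- For n ≥ 4 even and any graph H, the lexicographic product P_n[H] is Hamiltonian if and only if H has at least one edge. -/
open SimpleGraph Finset

private lemma nodup_of_cover_length {V : Type*} [Fintype V] [DecidableEq V] (l : List V)
    (hcov : ∀ v, v ∈ l) (hlen : l.length = Fintype.card V) : l.Nodup := by
  have h1 : l.dedup.Sublist l := l.dedup_sublist
  have h2 : l.dedup.length = Fintype.card V := by
    have ht : l.toFinset = Finset.univ := Finset.eq_univ_iff_forall.2 (by simpa using hcov)
    have := congrArg Finset.card ht
    rwa [List.card_toFinset, Finset.card_univ] at this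
  have he := h1.eq_of_length (by omega)
  rw [← he]; exact l.nodup_dedup

private lemma walk_of_chain {V : Type*} {G : SimpleGraph V} (l : List V) :
    ∀ (u : V), List.Chain G.Adj u l →
      ∃ (v : V) (p : G.Walk u v), p.support = u :: l ∧ (u :: l).getLast (by simp) = v := by
  induction l with
  | nil => exact fun u _ => ⟨u, Walk.nil, by simp, rfl⟩
  | cons w l ih =>
      intro u h
      simp only [List.Chain, List.isChain_cons_cons] at h
      obtain ⟨v, p, hs, hl⟩ := ih w h.2
      exact ⟨v, Walk.cons h.1 p, by simp [hs], by simpa using hl⟩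

private lemma isHamiltonian_of_cycle_list {V : Type*} [Fintype V] [DecidableEq V]
    {G : SimpleGraph V} (l : List V) (h3 : 3 ≤ l.length)
    (hchain : l.Chain' G.Adj)
    (hclose : ∀ x y, l.getLast? = some x → l.head? = some y → G.Adj x y)
    (hcov : ∀ v, v ∈ l) (hlen : l.length = Fintype.card V) :
    G.IsHamiltonian := by
  have hnd : l.Nodup := nodup_of_cover_length l hcov hlen
  match l, h3, hchain, hclose, hcov, hnd with
  | u :: r :: rest, h3, hchain, hclose, hcov, hnd =>
    intro _
    have hch : List.Chain G.Adj u (r :: rest) := hchain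
    simp only [List.Chain, List.isChain_cons_cons] at hch
    obtain ⟨hur, hch⟩ := hch
    obtain ⟨v, q, hs, hl⟩ := walk_of_chain rest r hch
    have hrest_ne : rest ≠ [] := by
      intro h; rw [h] at h3; simp at h3
    have hvlast : (u :: r :: rest).getLast (by simp) = v := by
      rwa [List.getLast_cons (by simp)]
    have hvu : G.Adj v u := by
      apply hclose
      · rw [List.getLast?_eq_getLast (l := u :: r :: rest) (by simp), hvlast]
      · rfl
    have hu_notin : u ∉ r :: rest := (List.nodup_cons.1 hnd).1
    have hr_notin : r ∉ rest := (List.nodup_cons.1 (List.nodup_cons.1 hnd).2).1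
    have hv_mem : v ∈ rest := by
      rw [← hl, List.getLast_cons hrest_ne]
      exact List.getLast_mem hrest_ne
    let q1 : G.Walk r u := q.concat hvu
    have hq1supp : q1.support = (r :: rest) ++ [u] := by
      simp [q1, Walk.support_concat, hs, List.concat_eq_append]
    have hnd2 : ((r :: rest) ++ [u]).Nodup := by
      rw [List.nodup_append]
      refine ⟨(List.nodup_cons.1 hnd).2, List.nodup_singleton u, ?_⟩
      intro x hx y hxu
      simp only [List.mem_singleton] at hxu
      subst hxu
      rintro rfl
      exact hu_notin hx
    let p : G.Walk u u := Walk.cons hur q1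
    have hcyc : p.IsCycle := by
      rw [Walk.cons_isCycle_iff]
      constructor
      · rw [Walk.isPath_def, hq1supp]
        exact hnd2
      · intro hmem
        have : q1.edges = q.edges.concat s(v, u) := Walk.edges_concat q hvu
        rw [this, List.concat_eq_append, List.mem_append] at hmem
        rcases hmem with hmem | hmem
        · exact hu_notin (hs ▸ q.fst_mem_support_of_mem_edges hmem)
        · simp only [List.mem_singleton, Sym2.eq, Sym2.rel_iff', Prod.mk.injEq,
            Prod.swap_prod_mk] at hmem
          rcases hmem with ⟨rfl, rfl⟩ | ⟨-, hr⟩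
          · exact hu_notin (List.mem_cons_of_mem _ hv_mem)
          · exact hr_notin (hr ▸ hv_mem)
    refine ⟨u, p, Walk.isHamiltonianCycle_iff_isCycle_and_support_count_tail_eq_one.2
      ⟨hcyc, ?_⟩⟩
    intro a
    have hps : p.support = u :: (r :: rest) ++ [u] := by
      simp [p, hq1supp]
    rw [hps]
    simp only [List.cons_append, List.tail_cons]
    apply List.count_eq_one_of_mem
    · exact hnd2
    · have := hcov a
      simp only [List.mem_cons, List.mem_append, List.mem_singleton] at this ⊢
      tauto

private lemma getLast?_range' (m : ℕ) (h : 0 < m) : (List.range m).getLast? = some (m-1) := by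
  cases m with
  | zero => omega
  | succ m => simp [List.range_succ]

private lemma chain'_range' {R : ℕ → ℕ → Prop} (n : ℕ) (h : ∀ i, i + 1 < n → R i (i+1)) :
    List.Chain' R (List.range n) := by
  cases n with
  | zero => exact List.IsChain.nil
  | succ n =>
    show List.IsChain R (List.range n.succ)
    rw [List.isChain_range_succ]
    intro i hi
    exact h i (by omega)

private lemma chain'_of_forall {α : Type*} {R : α → α → Prop} (h : ∀ x y, R x y) :
    ∀ l : List α, l.Chain' R := by
  intro l
  induction l with
  | nil => exact List.IsChain.nil
  | cons x l ih =>
    cases l with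
    | nil => exact List.IsChain.singleton x
    | cons y l => exact List.isChain_cons_cons.2 ⟨h x y, ih⟩

private lemma flatMap_ne_nil {α γ : Type*} (f : α → List γ) (l : List α)
    (hl : l ≠ []) (hf : ∀ x ∈ l, f x ≠ []) : l.flatMap f ≠ [] := by
  cases l with
  | nil => simp at hl
  | cons x l =>
    simp only [List.flatMap_cons, ne_eq, List.append_eq_nil_iff]
    intro h
    exact hf x (by simp) h.1

private lemma head?_flatMap {α γ : Type*} (f : α → List γ) (l : List α)
    (hf : ∀ x ∈ l, f x ≠ []) :
    (l.flatMap f).head? = l.head?.bind (fun x => (f x).head?) := by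
  cases l with
  | nil => simp
  | cons x l =>
    rw [List.flatMap_cons, List.head?_append_of_ne_nil _ (hf x (by simp))]
    simp

private lemma getLast?_flatMap {α γ : Type*} (f : α → List γ) :
    ∀ (l : List α), (∀ x ∈ l, f x ≠ []) →
    (l.flatMap f).getLast? = l.getLast?.bind (fun x => (f x).getLast?) := by
  intro l
  induction l with
  | nil => simp
  | cons x l ih =>
    intro hf
    cases l with
    | nil => simp
    | cons y l =>
      rw [List.flatMap_cons]
      rw [List.getLast?_append_of_ne_nil _ (flatMap_ne_nil f (y :: l) (by simp)
        (fun z hz => hf z (List.mem_cons_of_mem _ hz)))]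
      rw [ih (fun z hz => hf z (List.mem_cons_of_mem _ hz))]
      simp [List.getLast?_cons_cons]

private lemma chain'_flatMap {α γ : Type*} {R : γ → γ → Prop} (f : α → List γ) :
    ∀ (l : List α), (∀ x ∈ l, List.Chain' R (f x)) → (∀ x ∈ l, f x ≠ []) →
      (l.Chain' (fun x y => ∀ u ∈ (f x).getLast?, ∀ v ∈ (f y).head?, R u v)) →
      List.Chain' R (l.flatMap f) := by
  intro l
  induction l with
  | nil => exact fun _ _ _ => List.IsChain.nil
  | cons x l ih =>
    intro hc hne hris
    rw [List.flatMap_cons]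
    apply List.IsChain.append (hc x (by simp))
    · exact ih (fun z hz => hc z (List.mem_cons_of_mem _ hz))
        (fun z hz => hne z (List.mem_cons_of_mem _ hz)) (List.IsChain.tail hris)
    · intro u hu v hv
      cases l with
      | nil => simp at hv
      | cons y l =>
        rw [head?_flatMap _ _ (fun z hz => hne z (List.mem_cons_of_mem _ hz))] at hv
        simp only [List.head?_cons, Option.bind_some] at hv
        exact (List.isChain_cons_cons.1 hris).1 u hu v hv

section BackwardAux

variable {n : ℕ} {β : Type*} [Fintype β] [DecidableEq β] {H : SimpleGraph β}

private lemma lex_hamiltonian_of_edge (hn : 4 ≤ n) (hne : Even n)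
    {a b : β} (hab : H.Adj a b) :
    ∃ l : List (Fin n × β),
      3 ≤ l.length ∧ l.Chain' (lexProd (pathGraph n) H).Adj ∧
      (∀ x y, l.getLast? = some x → l.head? = some y → (lexProd (pathGraph n) H).Adj x y) ∧
      (∀ v, v ∈ l) ∧ l.length = Fintype.card (Fin n × β) := by
  set G := lexProd (pathGraph n) H with hG
  have hn0 : 0 < n := by omega
  obtain ⟨m, hm⟩ : ∃ m, n = 2 * m := hne.exists_two_nsmul n
  have hm2 : 2 ≤ m := by omega
  set k := Fintype.card β with hk
  have hk2 : 2 ≤ k := Fintype.one_lt_card_iff_nontrivial.2 ⟨⟨a, b, hab.ne⟩⟩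
  -- the column function
  set fc : ℕ → Fin n := fun j => ⟨j % n, Nat.mod_lt _ hn0⟩ with hfcdef
  have hfc : ∀ j, j < n → (fc j).val = j := fun j hj => Nat.mod_eq_of_lt hj
  have hcross : ∀ (i : ℕ) (x y : β), i + 1 < n → G.Adj (fc i, x) (fc (i+1), y) := by
    intro i x y h
    exact Or.inl (pathGraph_adj.2 (Or.inl (by rw [hfc i (by omega), hfc (i+1) h])))
  have hsame : ∀ (i : ℕ) {x y : β}, H.Adj x y → G.Adj (fc i, x) (fc i, y) :=
    fun i _ _ h => Or.inr ⟨rfl, h⟩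
  -- the other rows
  set cs : List β := ((Finset.univ.erase b).erase a).toList with hcs
  have ha_cs : a ∉ cs := by simp [hcs]
  have hb_cs : b ∉ cs := by simp [hcs, hab.ne']
  have hcs_mem : ∀ x, x ≠ a → x ≠ b → x ∈ cs := by
    intro x hxa hxb
    simp [hcs, hxa, hxb]
  have hcs_len : cs.length = k - 2 := by
    rw [hcs, Finset.length_toList, Finset.card_erase_of_mem (by simp [hab.ne]),
      Finset.card_erase_of_mem (by simp), Finset.card_univ]
    omega
  set rows : ℕ → List β := fun t => if t = 0 then cs ++ [b] else b :: cs with hrows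
  have hrows_ne : ∀ t, rows t ≠ [] := by
    intro t
    by_cases h : t = 0 <;> simp [hrows, h]
  have hrows_len : ∀ t, (rows t).length = k - 1 := by
    intro t
    by_cases h : t = 0 <;> simp [hrows, h, hcs_len] <;> omega
  have hb_rows : ∀ t, b ∈ rows t := by
    intro t
    by_cases h : t = 0 <;> simp [hrows, h]
  have hcs_rows : ∀ t c, c ∈ cs → c ∈ rows t := by
    intro t c hc
    by_cases h : t = 0 <;> simp [hrows, h, hc]
  -- the zigzag blocks
  set pr : ℕ → β → List (Fin n × β) := fun t c => [(fc (2*t+1), c), (fc (2*t), c)] with hpr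
  set F : ℕ → List (Fin n × β) := fun t => (rows t).flatMap (pr t) with hF
  have hpr_ne : ∀ t c, pr t c ≠ [] := by intro t c; simp [hpr]
  have hF_ne : ∀ t, F t ≠ [] := fun t => flatMap_ne_nil _ _ (hrows_ne t) (fun c _ => hpr_ne t c)
  have hF_chain : ∀ t, t < m → (F t).Chain' G.Adj := by
    intro t ht
    apply chain'_flatMap
    · intro c _
      refine List.isChain_pair.2 ?_
      exact (hcross (2*t) c c (by omega)).symm
    · exact fun c _ => hpr_ne t c
    · apply chain'_of_forall
      intro c c' u hu v hv
      simp [hpr] at hu hv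
      subst hu; subst hv
      exact hcross (2*t) c c' (by omega)
  have hF_head : ∀ t, (F t).head? = ((rows t).head?).map (fun c => (fc (2*t+1), c)) := by
    intro t
    rw [hF, head?_flatMap _ _ (fun c _ => hpr_ne t c)]
    cases hrw : (rows t).head? <;> simp [hpr]
  have hF_last : ∀ t, (F t).getLast? = ((rows t).getLast?).map (fun c => (fc (2*t), c)) := by
    intro t
    rw [hF, getLast?_flatMap _ _ (fun c _ => hpr_ne t c)]
    cases hrw : (rows t).getLast? <;> simp [hpr]
  -- the full list
  set L : List (Fin n × β) :=
    (List.range n).map (fun j => (fc j, a)) ++ (List.range m).reverse.flatMap F with hL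
  have hFlen : ∀ t, (F t).length = 2 * (k - 1) := by
    intro t
    rw [hF, List.length_flatMap]
    rw [List.sum_eq_card_nsmul _ 2 ?_]
    · simp [hrows_len t]; omega
    · intro x hx
      simp only [List.mem_map] at hx
      obtain ⟨c, -, rfl⟩ := hx
      simp [hpr]
  have hL2len : ((List.range m).reverse.flatMap F).length = m * (2 * (k - 1)) := by
    rw [List.length_flatMap]
    rw [List.sum_eq_card_nsmul _ (2 * (k - 1)) ?_]
    · simp [mul_comm]
    · intro x hx
      simp only [List.mem_map] at hx
      obtain ⟨t, -, rfl⟩ := hx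
      exact hFlen t
  have hLlen : L.length = n * k := by
    obtain ⟨k', hk'⟩ : ∃ k', k = k' + 2 := ⟨k - 2, by omega⟩
    rw [hL, List.length_append, List.length_map, List.length_range, hL2len, hk', hm,
      show k' + 2 - 1 = k' + 1 from by omega]
    ring
  have hcard : Fintype.card (Fin n × β) = n * k := by
    simp [Fintype.card_prod, hk]
  -- head? and getLast? of L
  have hpart1_ne : ((List.range n).map (fun j => (fc j, a))) ≠ [] := by
    simp; omega
  have hL2_ne : ((List.range m).reverse.flatMap F) ≠ [] := by
    apply flatMap_ne_nil _ _ (by simp; omega) (fun t _ => hF_ne t)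
  have hLhead : L.head? = some (fc 0, a) := by
    rw [hL, List.head?_append_of_ne_nil _ hpart1_ne, List.head?_map, List.head?_range]
    simp only [if_neg (by omega : ¬ n = 0)]
    rfl
  have hLlast : L.getLast? = some (fc 0, b) := by
    rw [hL, List.getLast?_append_of_ne_nil _ hL2_ne,
      getLast?_flatMap _ _ (fun t _ => hF_ne t), List.getLast?_reverse, List.head?_range]
    simp only [if_neg (by omega : ¬ m = 0)]
    rw [Option.bind_some, hF_last, show rows 0 = cs ++ [b] from by simp [hrows],
      List.getLast?_concat]
    rfl
  refine ⟨L, ?_, ?_, ?_, ?_, ?_⟩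
  · have h1 : 4 * 2 ≤ n * k := Nat.mul_le_mul hn hk2
    omega
  · -- the chain
    rw [hL]
    apply List.IsChain.append
    · rw [List.isChain_map]
      apply chain'_range'
      intro i hi
      exact hcross i a a hi
    · apply chain'_flatMap
      · intro t ht
        simp only [List.mem_reverse, List.mem_range] at ht
        exact hF_chain t ht
      · exact fun t _ => hF_ne t
      · show List.IsChain _ _
        rw [List.isChain_reverse]
        apply chain'_range'
        intro s hs
        intro u hu v hv
        rw [hF_last] at hu
        rw [hF_head] at hv
        rw [Option.mem_map] at hu hv
        obtain ⟨c, -, rfl⟩ := hu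
        obtain ⟨c', -, rfl⟩ := hv
        have h2 : 2*(s+1) = (2*s+1)+1 := by ring
        rw [h2]
        exact (hcross (2*s+1) c' c (by omega)).symm
    · -- glue
      intro u hu v hv
      rw [List.getLast?_map, getLast?_range' n (by omega), Option.mem_map] at hu
      obtain ⟨j, hj, rfl⟩ := hu
      obtain rfl : n - 1 = j := Option.mem_some_iff.mp hj
      rw [head?_flatMap _ _ (fun t _ => hF_ne t), List.head?_reverse,
        getLast?_range' m (by omega)] at hv
      rw [Option.bind_some, hF_head] at hv
      have hrm : rows (m-1) = b :: cs := by
        rw [hrows]; simp [show ¬ (m-1 = 0) by omega]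
      rw [hrm] at hv
      obtain rfl : (fc (2*(m-1)+1), b) = v := by simpa using hv
      have h3 : 2*(m-1)+1 = n-1 := by omega
      rw [h3]
      exact hsame (n-1) hab
  · -- closing edge
    intro x y hx hy
    rw [hLlast] at hx
    rw [hLhead] at hy
    cases hx; cases hy
    exact hsame 0 hab.symm
  · -- coverage
    rintro ⟨i, x⟩
    rw [hL, List.mem_append]
    by_cases hxa : x = a
    · left
      subst hxa
      rw [List.mem_map]
      exact ⟨i.val, by simp [i.isLt], by rw [Prod.ext_iff]; exact ⟨Fin.ext (hfc i.val i.isLt), rfl⟩⟩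
    · right
      rw [List.mem_flatMap]
      refine ⟨i.val / 2, by simp; omega, ?_⟩
      rw [hF, List.mem_flatMap]
      refine ⟨x, ?_, ?_⟩
      · by_cases hxb : x = b
        · subst hxb; exact hb_rows _
        · exact hcs_rows _ x (hcs_mem x hxa hxb)
      · have hi := i.isLt
        simp only [hpr, List.mem_cons, List.mem_singleton]
        rcases Nat.even_or_odd i.val with he | ho
        · have heq : fc (2 * (i.val / 2)) = i := by
            apply Fin.ext
            rw [hfc _ (by omega)]
            obtain ⟨c, hc⟩ := he
            omega
          right; left
          rw [heq]
        · have heq : fc (2 * (i.val / 2) + 1) = i := by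
            apply Fin.ext
            rw [hfc _ (by omega)]
            obtain ⟨c, hc⟩ := ho
            omega
          left
          rw [heq]
  · rw [hLlen, hcard]

end BackwardAux

private lemma ivt_aux (c : ℕ → ℕ) (hstep : ∀ t, c (t+1) = c t + 1 ∨ c t = c (t+1) + 1) :
    ∀ (d t1 : ℕ), c t1 ≤ 1 → c (t1 + d) = 2 → ∃ s, c s = 1 ∧ c (s+1) = 2 := by
  intro d
  induction d with
  | zero =>
    intro t1 h1 h2
    rw [Nat.add_zero] at h2
    omega
  | succ d ih =>
    intro t1 h1 h2
    by_cases hc : c (t1+1) ≤ 1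
    · exact ih (t1+1) hc (by rw [show t1+1+d = t1+(d+1) from by omega]; exact h2)
    · rcases hstep t1 with h | h <;> exact ⟨t1, by omega, by omega⟩

private lemma edge_of_lex_hamiltonian {n : ℕ} (hn : 4 ≤ n)
    {β : Type*} [Fintype β] [DecidableEq β] {H : SimpleGraph β}
    (hham : (lexProd (pathGraph n) H).IsHamiltonian) : H.edgeSet.Nonempty := by
  set G := lexProd (pathGraph n) H with hG
  by_contra hne
  have hHadj : ∀ x y : β, ¬ H.Adj x y := fun x y hxy =>
    hne ⟨s(x,y), (H.mem_edgeSet).2 hxy⟩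
  have hcard1 : Fintype.card (Fin n × β) ≠ 1 := by
    rw [Fintype.card_prod, Fintype.card_fin]
    rcases Nat.eq_zero_or_pos (Fintype.card β) with h | h
    · simp [h]
    · have := Nat.mul_le_mul hn h
      omega
  obtain ⟨v, p, hp⟩ := hham hcard1
  have hnn : ¬ p.Nil := hp.isCycle.not_nil
  set tl := p.support.tail with htl
  have hchain : List.Chain G.Adj v tl := by
    have h := p.isChain_adj_support
    rw [Walk.support_eq_cons] at h
    exact h
  have hnodup : tl.Nodup := hp.isCycle.support_nodup
  have hmemtl : ∀ x : Fin n × β, x ∈ tl := by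
    intro x
    have h := hp.isHamiltonian_tail.mem_support x
    rwa [Walk.support_tail_of_not_nil p hnn] at h
  set N := tl.length with hN
  have hN0 : 0 < N := by
    rw [hN]
    exact List.length_pos_iff.2 (fun h => by rw [h] at hmemtl; exact List.not_mem_nil (hmemtl v))
  set g : ℕ → Fin n × β := fun t => tl.get ⟨t % N, Nat.mod_lt _ hN0⟩ with hg
  have hgeq : ∀ (i j : ℕ) (hi : i < N) (hj : j < N), i = j →
      tl.get ⟨i, hi⟩ = tl.get ⟨j, hj⟩ := by
    intro i j hi hj h
    subst h
    rfl
  have hgper : ∀ t, g (t % N) = g t := by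
    intro t
    exact hgeq _ _ _ _ (Nat.mod_mod_of_dvd t dvd_rfl)
  have hgN : ∀ t, g (t + N) = g t := by
    intro t
    exact hgeq _ _ _ _ (by rw [Nat.add_mod_right])
  have hchg : (∀ h : 0 < tl.length, G.Adj v (tl.get ⟨0, h⟩)) ∧
      ∀ (i : ℕ) (h : i < tl.length - 1), G.Adj (tl.get ⟨i, by omega⟩) (tl.get ⟨i+1, by omega⟩) := by
    have h2 := List.isChain_iff_getElem.1 (show List.IsChain G.Adj (v :: tl) from hchain)
    exact ⟨fun h => by simpa using h2 0 (by simp; omega),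
      fun i h => by exact h2 (i+1) (by simp; omega)⟩
  have htlne : tl ≠ [] := by
    intro hh
    rw [hh] at hmemtl
    exact List.not_mem_nil (hmemtl v)
  have hlastv : tl.get ⟨N-1, by omega⟩ = v := by
    have h4 : p.support.getLast? = some v := by
      rw [List.getLast?_eq_getLast (l := p.support) (by simp), p.getLast_support]
    have h5 : p.support.getLast? = tl.getLast? := by
      rw [Walk.support_eq_cons p]
      obtain ⟨x, tl', htl'⟩ := List.exists_cons_of_ne_nil htlne
      rw [← htl, htl', List.getLast?_cons_cons]
    have h6 : tl.getLast? = some (tl.get ⟨N-1, by omega⟩) := by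
      rw [List.getLast?_eq_getLast htlne, List.getLast_eq_getElem]; rfl
    have h7 := h4.symm.trans (h5.trans h6)
    exact (Option.some_injective _ h7).symm
  have hadjg : ∀ t, G.Adj (g t) (g (t+1)) := by
    intro t
    have hmt : t % N < N := Nat.mod_lt _ hN0
    by_cases hlt : t % N + 1 < N
    · have h1 : (t+1) % N = t % N + 1 := by
        rw [← Nat.mod_add_mod]
        exact Nat.mod_eq_of_lt hlt
      have h2 : g (t+1) = tl.get ⟨t % N + 1, hlt⟩ := hgeq _ _ _ _ h1
      rw [h2]
      exact hchg.2 (t % N) (by omega)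
    · have hEq : t % N = N - 1 := by omega
      have h1 : (t+1) % N = 0 := by
        rw [← Nat.mod_add_mod, hEq, show N - 1 + 1 = N from by omega, Nat.mod_self]
      have h2 : g (t+1) = tl.get ⟨0, hN0⟩ := hgeq _ _ (Nat.mod_lt _ hN0) hN0 h1
      have h3 : g t = tl.get ⟨N-1, by omega⟩ := hgeq _ _ _ _ hEq
      rw [h2, h3, hlastv]
      exact hchg.1 hN0
  set col : ℕ → ℕ := fun t => ((g t).1 : ℕ) with hcol
  have hstep : ∀ t, col (t+1) = col t + 1 ∨ col t = col (t+1) + 1 := by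
    intro t
    have e1 : col (t+1) = ((g (t+1)).1 : ℕ) := rfl
    have e2 : col t = ((g t).1 : ℕ) := rfl
    rcases hadjg t with h | ⟨-, h2⟩
    · rcases pathGraph_adj.1 h with h | h
      · left; omega
      · right; omega
    · exact absurd h2 (hHadj _ _)
  have hcolper : ∀ t, col (t % N) = col t :=
    fun t => congrArg (fun x : Fin n × β => (x.1 : ℕ)) (hgper t)
  have hcolN : ∀ t, col (t + N) = col t :=
    fun t => congrArg (fun x : Fin n × β => (x.1 : ℕ)) (hgN t)
  -- cardinality of columns
  have hcardS : ∀ j : ℕ, j < n →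
      ((Finset.range N).filter (fun t => col t = j)).card = Fintype.card β := by
    intro j hj
    rw [← Finset.card_univ]
    apply Finset.card_bij (fun t _ => (g t).2)
    · intro a ha
      exact Finset.mem_univ _
    · intro a1 ha1 a2 ha2 heq
      simp only [Finset.mem_filter, Finset.mem_range] at ha1 ha2
      have hfst : (g a1).1 = (g a2).1 := by
        apply Fin.ext
        rw [show ((g a1).1 : ℕ) = col a1 from rfl, show ((g a2).1 : ℕ) = col a2 from rfl,
          ha1.2, ha2.2]
      have : g a1 = g a2 := Prod.ext hfst heq
      have hinj := List.nodup_iff_injective_get.1 hnodup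
      have := hinj this
      have h1 : a1 % N = a1 := Nat.mod_eq_of_lt ha1.1
      have h2 : a2 % N = a2 := Nat.mod_eq_of_lt ha2.1
      rw [Fin.mk.injEq] at this
      omega
    · intro x hx
      obtain ⟨⟨i, hi⟩, hget⟩ := List.mem_iff_get.1 (hmemtl (⟨j, hj⟩, x))
      refine ⟨i, ?_, ?_⟩
      · simp only [Finset.mem_filter, Finset.mem_range]
        refine ⟨hi, ?_⟩
        have hgi : g i = (⟨j, hj⟩, x) := by
          rw [hg, ← hget]
          exact hgeq _ _ _ _ (Nat.mod_eq_of_lt hi)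
        show ((g i).1 : ℕ) = j
        rw [hgi]
      · have : g i = (⟨j, hj⟩, x) := by
          rw [hg, ← hget]
          exact hgeq _ _ _ _ (Nat.mod_eq_of_lt hi)
        rw [this]
  -- the predecessor map identity
  have hkey : ∀ t, t < N → ((t + (N-1)) % N + 1) % N = t := by
    intro t ht
    rw [Nat.mod_add_mod, show t + (N-1) + 1 = t + N from by omega, Nat.add_mod_right]
    exact Nat.mod_eq_of_lt ht
  -- image of S0 under predecessor map is S1
  have himg : ((Finset.range N).filter (fun t => col t = 0)).image
      (fun t => (t + (N-1)) % N) = (Finset.range N).filter (fun t => col t = 1) := by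
    apply Finset.eq_of_subset_of_card_le
    · intro u hu
      rw [Finset.mem_image] at hu
      obtain ⟨t, ht, rfl⟩ := hu
      simp only [Finset.mem_filter, Finset.mem_range] at ht ⊢
      refine ⟨Nat.mod_lt _ hN0, ?_⟩
      rw [hcolper]
      have h1 : col (t + (N-1) + 1) = col t := by
        rw [show t + (N-1) + 1 = t + N from by omega, hcolN]
      have h2 := hstep (t + (N-1))
      omega
    · rw [Finset.card_image_of_injOn, hcardS 0 (by omega), hcardS 1 (by omega)]
      intro a1 ha1 a2 ha2 heq
      simp only [Finset.coe_filter, Set.mem_setOf_eq, Finset.mem_range] at ha1 ha2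
      have := congrArg (fun z => (z + 1) % N) heq
      simp only at this
      rw [hkey a1 ha1.1, hkey a2 ha2.1] at this
      exact this
  -- every position in column 1 has successor in column 0
  have hS1succ : ∀ s, s < N → col s = 1 → col (s+1) = 0 := by
    intro s hs hcs
    have hmem : s ∈ (Finset.range N).filter (fun t => col t = 1) := by
      simp only [Finset.mem_filter, Finset.mem_range]
      exact ⟨hs, hcs⟩
    rw [← himg, Finset.mem_image] at hmem
    obtain ⟨t, ht, hts⟩ := hmem
    simp only [Finset.mem_filter, Finset.mem_range] at ht
    have h1 : (s + 1) % N = t := by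
      rw [← hts]
      exact hkey t ht.1
    rw [← hcolper (s+1), h1]
    exact ht.2
  -- find a step from column 1 to column 2 (IVT)
  have hex1 : ∃ t1, t1 < N ∧ col t1 = 1 := by
    obtain ⟨⟨i, hi⟩, hget⟩ := List.mem_iff_get.1 (hmemtl (⟨1, by omega⟩, v.2))
    refine ⟨i, hi, ?_⟩
    have hgi : g i = (⟨1, by omega⟩, v.2) := by
      rw [hg, ← hget]
      exact hgeq _ _ _ _ (Nat.mod_eq_of_lt hi)
    show ((g i).1 : ℕ) = 1
    rw [hgi]
  have hex2 : ∃ t2, t2 < N ∧ col t2 = 2 := by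
    obtain ⟨⟨i, hi⟩, hget⟩ := List.mem_iff_get.1 (hmemtl (⟨2, by omega⟩, v.2))
    refine ⟨i, hi, ?_⟩
    have hgi : g i = (⟨2, by omega⟩, v.2) := by
      rw [hg, ← hget]
      exact hgeq _ _ _ _ (Nat.mod_eq_of_lt hi)
    show ((g i).1 : ℕ) = 2
    rw [hgi]
  obtain ⟨t1, ht1, hc1⟩ := hex1
  obtain ⟨t2, ht2, hc2⟩ := hex2
  have hex12 : ∃ d, col (t1 + d) = 2 := by
    rcases le_or_gt t1 t2 with h | h
    · exact ⟨t2 - t1, by rw [show t1 + (t2 - t1) = t2 from by omega]; exact hc2⟩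
    · exact ⟨t2 + N - t1, by
        rw [show t1 + (t2 + N - t1) = t2 + N from by omega, hcolN]; exact hc2⟩
  obtain ⟨d, hd⟩ := hex12
  obtain ⟨s, hs1, hs2⟩ := ivt_aux col hstep d t1 (by omega) hd
  -- contradiction
  have hsm : s % N < N := Nat.mod_lt _ hN0
  have hcsm : col (s % N) = 1 := by rw [hcolper]; exact hs1
  have := hS1succ (s % N) hsm hcsm
  have hfin : col (s % N + 1) = col (s + 1) := by
    rw [← hcolper (s+1), ← Nat.mod_add_mod, hcolper]
  omega

theorem even_path_lex_hamiltonian_iff (n : ℕ) (hn : 4 ≤ n) (hne : Even n)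
    {β : Type*} [Fintype β] [DecidableEq β] (H : SimpleGraph β) :
    (lexProd (pathGraph n) H).IsHamiltonian ↔ H.edgeSet.Nonempty := by
  constructor
  · intro h
    exact edge_of_lex_hamiltonian hn h
  · rintro ⟨e, he⟩
    induction e with
    | _ x y =>
      have hab : H.Adj x y := H.mem_edgeSet.1 he
      obtain ⟨l, h3, hch, hcl, hcov, hlen⟩ := lex_hamiltonian_of_edge hn hne hab
      exact isHamiltonian_of_cycle_list l h3 hch hcl hcov hlen
end
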